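/- For k-dimensional subspaces x, y of V with 1 < i < k where i = k - dim(x ∩ y), the following inner products hold: ⟨x̂, (x∩y)^⟩ = q^k [k-i][n-k], ⟨x̂, (x+y)^⟩ = q^{k+i}[k][n-k-i], ‖(x∩y)^‖² = q^{k-i}[k-i][n-k+i], ‖(x+y)^‖² = q^{k+i}[k+i][n-k-i], and ⟨(x∩y)^, (x+y)^⟩ = q^{k+i}[k-i][n-k-i]. -/

import Mathlib

/-- The Gaussian number `[m] = (q^m - 1)/(q - 1)` as a real number. -/
noncomputable def gaussR (q m : ℕ) : ℝ := ((q : ℝ) ^ m - 1) / ((q : ℝ) - 1)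

/-- The vector `û ∈ E` attached to a subspace `u`: the sum of `ŝ` over all
one-dimensional subspaces `s ⊆ u`. -/
noncomputable def uhat {F V : Type*} [Field F] [AddCommGroup V] [Module F V]
    {E : Type*} [NormedAddCommGroup E] [InnerProductSpace ℝ E]
    (shat : {s : Submodule F V // Module.finrank F s = 1} → E)
    (u : Submodule F V) : E :=
  ∑ᶠ (s : {s : Submodule F V // Module.finrank F s = 1}) (_ : s.1 ≤ u), shat s

open Module Finset

section Aux

variable {F V : Type*} [Field F] [Fintype F] [AddCommGroup V] [Module F V]
    [FiniteDimensional F V]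

private lemma count_lines (u : Submodule F V) :
    Nat.card {s : {s : Submodule F V // finrank F s = 1} // s.1 ≤ u}
      * (Fintype.card F - 1) = Fintype.card F ^ finrank F u - 1 := by
  classical
  haveI : Finite V := Module.finite_of_finite F
  haveI : Fintype V := Fintype.ofFinite V
  haveI : Finite (Submodule F V) :=
    Finite.of_injective (fun s => (s : Set V)) SetLike.coe_injective
  set S := {s : {s : Submodule F V // finrank F s = 1} // s.1 ≤ u}
  haveI : Fintype S := Fintype.ofFinite S
  set α := {v : u // v ≠ 0}
  let f : α → S := fun v =>
    ⟨⟨Submodule.span F {(v.1 : V)},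
        finrank_span_singleton (by simpa using v.2)⟩,
      (Submodule.span_singleton_le_iff_mem _ _).2 v.1.2⟩
  have hcardα : Fintype.card α = Fintype.card F ^ finrank F u - 1 := by
    have h1 : Fintype.card α
        = Fintype.card u - Fintype.card {v : u // v = 0} :=
      Fintype.card_subtype_compl _
    rw [h1, Fintype.card_subtype_eq (0 : u), card_eq_pow_finrank (K := F)]
  have hfiber : ∀ s : S, Fintype.card {v : α // f v = s} = Fintype.card F - 1 := by
    intro s
    have e : {v : α // f v = s} ≃ {w : s.1.1 // w ≠ 0} :=
      { toFun := fun v => ⟨⟨(v.1.1 : V), by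
          have : Submodule.span F {(v.1.1 : V)} = s.1.1 := by
            have h := congrArg (fun t : S => t.1.1) v.2
            exact h
          rw [← this]
          exact Submodule.mem_span_singleton_self _⟩, by
          simpa using v.1.2⟩
        invFun := fun w => ⟨⟨⟨(w.1 : V), s.2 w.1.2⟩, by simpa using w.2⟩, by
          apply Subtype.ext
          apply Subtype.ext
          show Submodule.span F {(w.1 : V)} = s.1.1
          have hw : (w.1 : V) ≠ 0 := by simpa using w.2
          have hle : Submodule.span F {(w.1 : V)} ≤ s.1.1 :=
            (Submodule.span_singleton_le_iff_mem _ _).2 w.1.2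
          exact Submodule.eq_of_le_of_finrank_eq hle
            (by rw [finrank_span_singleton hw, s.1.2])⟩
        left_inv := fun v => by ext; rfl
        right_inv := fun w => by ext; rfl }
    rw [Fintype.card_congr e]
    have h1 : Fintype.card {w : s.1.1 // w = 0} = 1 := Fintype.card_subtype_eq _
    have h2 : Fintype.card {w : s.1.1 // w ≠ 0}
        = Fintype.card s.1.1 - Fintype.card {w : s.1.1 // w = 0} :=
      Fintype.card_subtype_compl _
    rw [h2, h1, card_eq_pow_finrank (K := F), s.1.2, pow_one]
  have hsum : Fintype.card α = ∑ s : S, Fintype.card {v : α // f v = s} := by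
    rw [← Fintype.card_sigma]
    exact (Fintype.card_congr (Equiv.sigmaFiberEquiv f)).symm
  rw [Nat.card_eq_fintype_card, ← hcardα, hsum]
  simp only [hfiber, Finset.sum_const, Finset.card_univ, smul_eq_mul]

private lemma count_lines_real {q : ℕ} (hq : Fintype.card F = q) (u : Submodule F V) :
    (Nat.card {s : {s : Submodule F V // finrank F s = 1} // s.1 ≤ u} : ℝ)
      = gaussR q (finrank F u) := by
  have h2 : 2 ≤ q := hq ▸ Fintype.one_lt_card
  have hc := count_lines u
  rw [hq] at hc
  have h1 : 1 ≤ q := by omega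
  have h1p : 1 ≤ q ^ finrank F u := Nat.one_le_pow _ _ (by omega)
  have hcast : (Nat.card {s : {s : Submodule F V // finrank F s = 1} // s.1 ≤ u} : ℝ)
      * ((q : ℝ) - 1) = (q : ℝ) ^ finrank F u - 1 := by
    have := congrArg (Nat.cast : ℕ → ℝ) hc
    push_cast [Nat.cast_sub h1, Nat.cast_sub h1p] at this
    convert this using 2 <;> push_cast <;> ring
  have hne : (q : ℝ) - 1 ≠ 0 := by
    have : (2 : ℝ) ≤ (q : ℝ) := by exact_mod_cast h2
    linarith
  rw [gaussR, eq_div_iff hne]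
  exact hcast

private lemma uhat_eq_sum {E : Type*} [NormedAddCommGroup E] [InnerProductSpace ℝ E]
    (shat : {s : Submodule F V // finrank F s = 1} → E) (u : Submodule F V)
    [Fintype {s : Submodule F V // finrank F s = 1}]
    [DecidablePred fun s : {s : Submodule F V // finrank F s = 1} => s.1 ≤ u] :
    uhat shat u = ∑ s ∈ Finset.univ.filter
      (fun s : {s : Submodule F V // finrank F s = 1} => s.1 ≤ u), shat s := by
  have h : ({s : {s : Submodule F V // finrank F s = 1} | s.1 ≤ u} : Set _)
      = ↑(Finset.univ.filter
        (fun s : {s : Submodule F V // finrank F s = 1} => s.1 ≤ u)) := by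
    ext s; simp
  rw [show uhat shat u = ∑ᶠ s ∈ {s : {s : Submodule F V // finrank F s = 1} | s.1 ≤ u},
      shat s from rfl, h, finsum_mem_coe_finset]

private lemma inner_uhat {q n : ℕ} (hq : Fintype.card F = q) (hn : finrank F V = n)
    {E : Type*} [NormedAddCommGroup E] [InnerProductSpace ℝ E]
    (shat : {s : Submodule F V // finrank F s = 1} → E)
    (hnorm : ∀ s, ‖shat s‖ ^ 2 = gaussR q n - 1)
    (hinner : ∀ s t, s ≠ t → (inner ℝ (shat s) (shat t) : ℝ) = -1)
    {u w : Submodule F V} (huw : u ≤ w) :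
    (inner ℝ (uhat shat u) (uhat shat w) : ℝ)
      = gaussR q (finrank F u) * (gaussR q n - gaussR q (finrank F w)) := by
  classical
  haveI : Finite V := Module.finite_of_finite F
  haveI : Finite (Submodule F V) :=
    Finite.of_injective (fun s => (s : Set V)) SetLike.coe_injective
  haveI : Fintype {s : Submodule F V // finrank F s = 1} := Fintype.ofFinite _
  set A := Finset.univ.filter
    (fun s : {s : Submodule F V // finrank F s = 1} => s.1 ≤ u) with hA
  set B := Finset.univ.filter
    (fun s : {s : Submodule F V // finrank F s = 1} => s.1 ≤ w) with hB
  have hAcard : (A.card : ℝ) = gaussR q (finrank F u) := by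
    rw [← count_lines_real hq u, Nat.card_eq_fintype_card, Fintype.card_subtype]
  have hBcard : (B.card : ℝ) = gaussR q (finrank F w) := by
    rw [← count_lines_real hq w, Nat.card_eq_fintype_card, Fintype.card_subtype]
  rw [uhat_eq_sum shat u, uhat_eq_sum shat w, sum_inner, ← hA, ← hB]
  have key : ∀ s ∈ A, (inner ℝ (shat s) (∑ t ∈ B, shat t) : ℝ)
      = gaussR q n - (B.card : ℝ) := by
    intro s hs
    have hsB : s ∈ B := by
      simp only [hA, hB, Finset.mem_filter, Finset.mem_univ, true_and] at hs ⊢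
      exact hs.trans huw
    have hB1 : 1 ≤ B.card := Finset.card_pos.2 ⟨s, hsB⟩
    rw [inner_sum, ← Finset.add_sum_erase B _ hsB]
    have h1 : (inner ℝ (shat s) (shat s) : ℝ) = gaussR q n - 1 := by
      rw [real_inner_self_eq_norm_sq, hnorm]
    have h2 : ∑ t ∈ B.erase s, (inner ℝ (shat s) (shat t) : ℝ)
        = ∑ t ∈ B.erase s, (-1 : ℝ) := by
      refine Finset.sum_congr rfl fun t ht => ?_
      exact hinner s t (Finset.ne_of_mem_erase ht).symm
    rw [h1, h2, Finset.sum_const, Finset.card_erase_of_mem hsB, nsmul_eq_mul]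
    push_cast [Nat.cast_sub hB1]
    ring
  rw [Finset.sum_congr rfl key, Finset.sum_const, nsmul_eq_mul, hAcard, hBcard]

private lemma gauss_arith {q : ℕ} (hq : 2 ≤ q) {a b n : ℕ} (hbn : b ≤ n) :
    gaussR q a * (gaussR q n - gaussR q b)
      = (q : ℝ) ^ b * gaussR q a * gaussR q (n - b) := by
  have hpow : (q : ℝ) ^ b * (q : ℝ) ^ (n - b) = (q : ℝ) ^ n := by
    rw [← pow_add]; congr 1; omega
  have h : gaussR q n - gaussR q b = (q : ℝ) ^ b * gaussR q (n - b) := by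
    rw [gaussR, gaussR, gaussR, div_sub_div_same, ← mul_div_assoc]
    congr 1
    rw [← hpow]; ring
  rw [h]; ring

end Aux

theorem stmt12 {F V : Type*} [Field F] [Fintype F] [AddCommGroup V] [Module F V]
    [FiniteDimensional F V] {q n k : ℕ} (hq : Fintype.card F = q)
    (hn : Module.finrank F V = n) (hnk : n > 2 * k) (hk : 2 * k ≥ 6)
    {E : Type*} [NormedAddCommGroup E] [InnerProductSpace ℝ E]
    (shat : {s : Submodule F V // Module.finrank F s = 1} → E)
    (hspan : Submodule.span ℝ (Set.range shat) = ⊤)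
    (hnorm : ∀ s, ‖shat s‖ ^ 2 = gaussR q n - 1)
    (hinner : ∀ s t, s ≠ t → (inner ℝ (shat s) (shat t) : ℝ) = -1)
    (hsum : ∑ᶠ s, shat s = 0)
    (x y : Submodule F V) {i : ℕ} (hi1 : 1 < i) (hik : i < k)
    (hx : Module.finrank F x = k) (hy : Module.finrank F y = k)
    (hxy : Module.finrank F (x ⊓ y : Submodule F V) = k - i) :
    (inner ℝ (uhat shat x) (uhat shat (x ⊓ y)) : ℝ)
        = (q : ℝ) ^ k * gaussR q (k - i) * gaussR q (n - k) ∧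
    (inner ℝ (uhat shat x) (uhat shat (x ⊔ y)) : ℝ)
        = (q : ℝ) ^ (k + i) * gaussR q k * gaussR q (n - k - i) ∧
    ‖uhat shat (x ⊓ y)‖ ^ 2
        = (q : ℝ) ^ (k - i) * gaussR q (k - i) * gaussR q (n - k + i) ∧
    ‖uhat shat (x ⊔ y)‖ ^ 2
        = (q : ℝ) ^ (k + i) * gaussR q (k + i) * gaussR q (n - k - i) ∧
    (inner ℝ (uhat shat (x ⊓ y)) (uhat shat (x ⊔ y)) : ℝ)
        = (q : ℝ) ^ (k + i) * gaussR q (k - i) * gaussR q (n - k - i) := by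
  have hq2 : 2 ≤ q := hq ▸ Fintype.one_lt_card
  have hsup : Module.finrank F (x ⊔ y : Submodule F V) = k + i := by
    have h := Submodule.finrank_sup_add_finrank_inf_eq x y
    rw [hx, hy, hxy] at h
    omega
  have hkn : k ≤ n := by
    have := Submodule.finrank_le x
    rw [hx, hn] at this
    exact this
  have hsupn : k + i ≤ n := by
    have := Submodule.finrank_le (x ⊔ y : Submodule F V)
    rw [hsup, hn] at this
    exact this
  refine ⟨?_, ?_, ?_, ?_, ?_⟩
  · rw [real_inner_comm,
      inner_uhat hq hn shat hnorm hinner (inf_le_left : x ⊓ y ≤ x), hxy, hx,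
      gauss_arith hq2 hkn]
  · rw [inner_uhat hq hn shat hnorm hinner (le_sup_left : x ≤ x ⊔ y), hx, hsup,
      gauss_arith hq2 hsupn, Nat.sub_sub]
  · rw [← real_inner_self_eq_norm_sq,
      inner_uhat hq hn shat hnorm hinner (le_refl (x ⊓ y)), hxy,
      gauss_arith hq2 (le_trans (Nat.sub_le k i) hkn)]
    congr 2
    omega
  · rw [← real_inner_self_eq_norm_sq,
      inner_uhat hq hn shat hnorm hinner (le_refl (x ⊔ y)), hsup,
      gauss_arith hq2 hsupn, Nat.sub_sub]
  · rw [inner_uhat hq hn shat hnorm hinner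
        (le_trans inf_le_left le_sup_left : x ⊓ y ≤ x ⊔ y), hxy, hsup,
      gauss_arith hq2 hsupn, Nat.sub_sub]
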